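/- Fix a ∈ (0,1). There exists a finite constant C (depending only on α and a) such that for all ε ∈ (0,1): ∫₀^∞ ( min(1, ε² ξ^{2α}) ) e^{−2 ε^a ξ^α} (1 + ξ^α)^{−1} dξ ≤ C ε^{(2α − a − aα)/α}. -/

import Mathlib

open MeasureTheory Real

/-- For fixed `a ∈ (0,1)` there is a finite constant `C` (depending only on `α`
and `a`) such that for all `ε ∈ (0,1)`:
`∫₀^∞ min(1, ε²ξ^{2α}) e^{−2ε^a ξ^α} (1 + ξ^α)⁻¹ dξ ≤ C ε^{(2α − a − aα)/α}`. -/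
theorem stmt_12 (α : ℝ) (hα : α ∈ Set.Ioc (1 : ℝ) 2)
    (a : ℝ) (ha : a ∈ Set.Ioo (0 : ℝ) 1) :
    ∃ C : ℝ, ∀ ε ∈ Set.Ioo (0 : ℝ) 1,
      (∫ ξ in Set.Ioi (0 : ℝ),
          min 1 (ε ^ 2 * ξ ^ (2 * α)) * Real.exp (-(2 * ε ^ a * ξ ^ α))
            / (1 + ξ ^ α))
        ≤ C * ε ^ ((2 * α - a - a * α) / α) := by
  obtain ⟨hα1, hα2⟩ := hα
  obtain ⟨ha0, ha1⟩ := ha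
  have hα0 : (0:ℝ) < α := by linarith
  refine ⟨(2:ℝ) ^ (-(α + 1) / α) * (1 / α) * Real.Gamma ((α + 1) / α), ?_⟩
  rintro ε ⟨hε0, hε1⟩
  have hεa : (0:ℝ) < ε ^ a := Real.rpow_pos_of_pos hε0 a
  have hb : (0:ℝ) < 2 * ε ^ a := by positivity
  have hint : IntegrableOn
      (fun ξ : ℝ => ε ^ 2 * (ξ ^ α * Real.exp (-(2 * ε ^ a) * ξ ^ α)))
      (Set.Ioi 0) := by
    exact (integrableOn_rpow_mul_exp_neg_mul_rpow (by linarith : (-1:ℝ) < α)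
      hα0 hb).const_mul _
  have hmono : (∫ ξ in Set.Ioi (0 : ℝ),
        min 1 (ε ^ 2 * ξ ^ (2 * α)) * Real.exp (-(2 * ε ^ a * ξ ^ α))
          / (1 + ξ ^ α))
      ≤ ∫ ξ in Set.Ioi (0 : ℝ),
        ε ^ 2 * (ξ ^ α * Real.exp (-(2 * ε ^ a) * ξ ^ α)) := by
    refine integral_mono_of_nonneg ?_ hint ?_
    · filter_upwards [ae_restrict_mem measurableSet_Ioi] with ξ hξ
      have hξ0 : (0:ℝ) < ξ := hξ
      have h1 : (0:ℝ) ≤ min 1 (ε ^ 2 * ξ ^ (2 * α)) := by positivity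
      have h2 : (0:ℝ) < 1 + ξ ^ α := by positivity
      positivity
    · filter_upwards [ae_restrict_mem measurableSet_Ioi] with ξ hξ
      have hξ0 : (0:ℝ) < ξ := hξ
      have hξα : (0:ℝ) < ξ ^ α := Real.rpow_pos_of_pos hξ0 α
      have h2 : (0:ℝ) < 1 + ξ ^ α := by positivity
      have hmin : min 1 (ε ^ 2 * ξ ^ (2 * α)) ≤ ε ^ 2 * ξ ^ (2 * α) :=
        min_le_right _ _
      have hsplit : ξ ^ (2 * α) = ξ ^ α * ξ ^ α := by
        rw [two_mul, Real.rpow_add hξ0]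
      have hdiv : ξ ^ (2 * α) / (1 + ξ ^ α) ≤ ξ ^ α := by
        rw [div_le_iff₀ h2, hsplit]
        nlinarith [hξα.le]
      have hexp : (0:ℝ) < Real.exp (-(2 * ε ^ a * ξ ^ α)) := Real.exp_pos _
      calc min 1 (ε ^ 2 * ξ ^ (2 * α)) * Real.exp (-(2 * ε ^ a * ξ ^ α)) / (1 + ξ ^ α)
          ≤ ε ^ 2 * ξ ^ (2 * α) * Real.exp (-(2 * ε ^ a * ξ ^ α)) / (1 + ξ ^ α) := by
            gcongr
        _ = ε ^ 2 * (ξ ^ (2 * α) / (1 + ξ ^ α)) * Real.exp (-(2 * ε ^ a * ξ ^ α)) := by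
            ring
        _ ≤ ε ^ 2 * ξ ^ α * Real.exp (-(2 * ε ^ a * ξ ^ α)) := by
            gcongr
        _ = ε ^ 2 * (ξ ^ α * Real.exp (-(2 * ε ^ a) * ξ ^ α)) := by
            ring_nf
  refine hmono.trans ?_
  rw [integral_const_mul, integral_rpow_mul_exp_neg_mul_rpow hα0 (by linarith) hb]
  have hb_pow : (2 * ε ^ a) ^ (-(α + 1) / α)
      = 2 ^ (-(α + 1) / α) * ε ^ (a * (-(α + 1) / α)) := by
    rw [Real.mul_rpow (by norm_num) hεa.le, ← Real.rpow_mul hε0.le]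
  have hexp_eq : (2:ℝ) + a * (-(α + 1) / α) = (2 * α - a - a * α) / α := by
    field_simp
    ring
  calc ε ^ 2 * ((2 * ε ^ a) ^ (-(α + 1) / α) * (1 / α) * Real.Gamma ((α + 1) / α))
      = 2 ^ (-(α + 1) / α) * (1 / α) * Real.Gamma ((α + 1) / α)
        * (ε ^ (2:ℝ) * ε ^ (a * (-(α + 1) / α))) := by
        rw [hb_pow, Real.rpow_two]
        ring
    _ = 2 ^ (-(α + 1) / α) * (1 / α) * Real.Gamma ((α + 1) / α)
        * ε ^ ((2 * α - a - a * α) / α) := by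
        rw [← Real.rpow_add hε0, hexp_eq]
    _ ≤ 2 ^ (-(α + 1) / α) * (1 / α) * Real.Gamma ((α + 1) / α)
        * ε ^ ((2 * α - a - a * α) / α) := le_rfl
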